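/- Let d ≥ 1, let μ be a positive measure on ℝ^d such that 0 < ∫ p(x)² dμ(x) < ∞ for every nonzero polynomial p in d variables, let Λ ⊆ ℕ^d be a finite, downward-closed multi-index set with maximal half-set size L = L(Λ), let Θ be a maximal half-set for Λ, and let q₁, …, q_L be an L²(μ)-orthonormal basis of P_Θ. If an L-point quadrature rule with nodes x₁, …, x_L ∈ ℝ^d and real weights w₁, …, w_L is exact on P_Λ, then the L × L matrix V with entries V_{m,k} = q_k(x_m) is invertible. In particular, the interpolation problem from P_Θ on the nodes x₁, …, x_L is uniquely solvable. -/

import Mathlib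

open Pointwise MeasureTheory

/-- The maximal half-set size `L(Λ)`: the maximum cardinality of a multi-index set `Θ`
with `Θ + Θ ⊆ Λ`. -/
noncomputable def maxHalfSetSize {d : ℕ} (Λ : Finset (Fin d →₀ ℕ)) : ℕ :=
  sSup {n : ℕ | ∃ Θ : Finset (Fin d →₀ ℕ), Θ + Θ ⊆ Λ ∧ Θ.card = n}

/-- With `μ` a positive measure on `ℝ^d` (with `0 < ∫ p² dμ < ∞` for every
nonzero polynomial), `Λ` finite downward closed with maximal half-set size `L`, `Θ` a
maximal half-set, and `q₁, …, q_L` an `L²(μ)`-orthonormal basis of `P_Θ`: if an `L`-point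
quadrature rule is exact on `P_Λ`, then the `L × L` Vandermonde-like matrix
`V_{m,k} = q_k(x_m)` is invertible. -/
theorem quasi_optimal_vandermonde_invertible {d : ℕ} (hd : 1 ≤ d)
    (μ : Measure (Fin d → ℝ))
    (hμ : ∀ p : MvPolynomial (Fin d) ℝ, p ≠ 0 →
      Integrable (fun x => (MvPolynomial.eval x p) ^ 2) μ ∧
      0 < ∫ x, (MvPolynomial.eval x p) ^ 2 ∂μ)
    (Λ : Finset (Fin d →₀ ℕ))
    (hdc : ∀ α ∈ Λ, ∀ β : Fin d →₀ ℕ, β ≤ α → β ∈ Λ)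
    (L : ℕ) (hL : L = maxHalfSetSize Λ)
    (Θ : Finset (Fin d →₀ ℕ)) (hΘhalf : Θ + Θ ⊆ Λ) (hΘmax : Θ.card = L)
    (q : Fin L → MvPolynomial (Fin d) ℝ)
    (hqspan : Submodule.span ℝ (Set.range q) =
      Submodule.span ℝ ((fun α : Fin d →₀ ℕ => (MvPolynomial.monomial α (1 : ℝ))) '' ↑Θ))
    (hqortho : ∀ j k, ∫ y, MvPolynomial.eval y (q j) * MvPolynomial.eval y (q k) ∂μ =
      if j = k then 1 else 0)
    (x : Fin L → (Fin d → ℝ)) (w : Fin L → ℝ)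
    (hquad : ∀ p ∈ Submodule.span ℝ
        ((fun α : Fin d →₀ ℕ => (MvPolynomial.monomial α (1 : ℝ))) '' ↑Λ),
      ∑ m, w m * MvPolynomial.eval (x m) p = ∫ y, MvPolynomial.eval y p ∂μ) :
    IsUnit (Matrix.of (fun m k : Fin L => MvPolynomial.eval (x m) (q k))) := by

  set monΘ := Submodule.span ℝ ((fun α : Fin d →₀ ℕ => (MvPolynomial.monomial α (1 : ℝ))) '' ↑Θ) with hmonΘ
  set monΛ := Submodule.span ℝ ((fun α : Fin d →₀ ℕ => (MvPolynomial.monomial α (1 : ℝ))) '' ↑Λ) with hmonΛ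
  have hqmem : ∀ k, q k ∈ monΘ := by
    intro k
    rw [← hqspan]
    exact Submodule.subset_span ⟨k, rfl⟩
  have hmul1 : ∀ α ∈ Θ, ∀ r ∈ monΘ, (MvPolynomial.monomial α (1 : ℝ)) * r ∈ monΛ := by
    intro α hα r hr
    have : monΘ ≤ Submodule.comap (LinearMap.mulLeft ℝ (MvPolynomial.monomial α (1 : ℝ))) monΛ := by
      rw [hmonΘ]
      apply Submodule.span_le.mpr
      rintro _ ⟨β, hβ, rfl⟩
      simp only [SetLike.mem_coe, Submodule.mem_comap, LinearMap.mulLeft_apply]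
      rw [MvPolynomial.monomial_mul, one_mul]
      exact Submodule.subset_span ⟨α + β, hΘhalf (Finset.add_mem_add hα hβ), rfl⟩
    exact this hr
  have hmul : ∀ p ∈ monΘ, ∀ r ∈ monΘ, p * r ∈ monΛ := by
    intro p hp r hr
    have : monΘ ≤ Submodule.comap (LinearMap.mulRight ℝ r) monΛ := by
      conv_lhs => rw [hmonΘ]
      apply Submodule.span_le.mpr
      rintro _ ⟨α, hα, rfl⟩
      simpa using hmul1 α hα r hr
    exact this hp
  have key : ∀ j k, ∑ m, w m * (MvPolynomial.eval (x m) (q j) * MvPolynomial.eval (x m) (q k))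
      = if j = k then 1 else 0 := by
    intro j k
    have h1 := hquad (q j * q k) (hmul _ (hqmem j) _ (hqmem k))
    simp only [map_mul] at h1
    rw [h1]
    exact hqortho j k
  set V := Matrix.of (fun m k : Fin L => MvPolynomial.eval (x m) (q k)) with hV
  set A := Matrix.of (fun j m : Fin L => MvPolynomial.eval (x m) (q j) * w m) with hA
  have hAV : A * V = 1 := by
    ext j k
    rw [Matrix.mul_apply]
    simp only [hA, hV, Matrix.of_apply, Matrix.one_apply]
    rw [← key j k]
    apply Finset.sum_congr rfl
    intro m _
    ring
  exact (Matrix.isUnit_iff_isUnit_det _).mpr (Matrix.isUnit_det_of_left_inverse hAV)
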